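/- Let v₀(y) = (3/y²)·e^{y²/4}·(−y + (2+y²)·D₊(y/2)) where D₊(y) = e^{−y²}·∫₀^y e^{x²} dx. Then v₀ solves −v₀''(y) − (2/y − y/2)·v₀'(y) + (2/y²)·v₀(y) = 0 for all y > 0. -/

import Mathlib

noncomputable def dawson (y : ℝ) : ℝ := Real.exp (-y^2) * ∫ x in (0:ℝ)..y, Real.exp (x^2)

noncomputable def v₀ (y : ℝ) : ℝ :=
  3 / y^2 * Real.exp (y^2/4) * (-y + (2 + y^2) * dawson (y/2))

noncomputable def Iexp (y : ℝ) : ℝ := ∫ x in (0:ℝ)..(y/2), Real.exp (x^2)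

noncomputable def gfun (y : ℝ) : ℝ := -y * Real.exp (y^2/4) + (2 + y^2) * Iexp y

noncomputable def wfun (y : ℝ) : ℝ := 3 / y^2 * gfun y

noncomputable def v₁ (y : ℝ) : ℝ := -6/y^3 * gfun y + 6/y * Iexp y

lemma v0_eq : v₀ = wfun := by
  funext y
  unfold v₀ wfun gfun Iexp dawson
  have h : Real.exp (y^2/4) * Real.exp (-(y/2)^2) = 1 := by
    rw [← Real.exp_add, show y^2/4 + -(y/2)^2 = 0 from by ring, Real.exp_zero]
  linear_combination (3/y^2 * (2+y^2) * ∫ x in (0:ℝ)..(y/2), Real.exp (x^2)) * h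

lemma hI (y : ℝ) : HasDerivAt Iexp (Real.exp (y^2/4) / 2) y := by
  have hc : Continuous fun x : ℝ => Real.exp (x^2) := by continuity
  have hE : HasDerivAt (fun t => ∫ x in (0:ℝ)..t, Real.exp (x^2))
      (Real.exp ((y/2)^2)) (y/2) :=
    intervalIntegral.integral_hasDerivAt_right (hc.intervalIntegrable _ _)
      (hc.stronglyMeasurableAtFilter _ _) hc.continuousAt
  have := hE.comp y ((hasDerivAt_id y).div_const 2)
  have h2 : ((y:ℝ)/2)^2 = y^2/4 := by ring
  refine this.congr_deriv ?_
  · rw [h2]; ring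

lemma hexp (y : ℝ) : HasDerivAt (fun y : ℝ => Real.exp (y^2/4)) (y/2 * Real.exp (y^2/4)) y := by
  have := (Real.hasDerivAt_exp (y^2/4)).comp y ((hasDerivAt_pow 2 y).div_const 4)
  refine this.congr_deriv ?_
  ring

lemma hg (y : ℝ) : HasDerivAt gfun (2*y*Iexp y) y := by
  have h1 : HasDerivAt (fun y : ℝ => -y * Real.exp (y^2/4))
      ((-1) * Real.exp (y^2/4) + (-y) * (y/2 * Real.exp (y^2/4))) y :=
    (hasDerivAt_id y).neg.mul (hexp y)
  have h2 : HasDerivAt (fun y : ℝ => (2 + y^2) * Iexp y)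
      ((2*y^1) * Iexp y + (2 + y^2) * (Real.exp (y^2/4) / 2)) y :=
    ((hasDerivAt_pow 2 y).const_add 2).mul (hI y)
  have := h1.add h2
  refine this.congr_deriv ?_
  ring

lemma hw (y : ℝ) (hy : y ≠ 0) : HasDerivAt wfun (v₁ y) y := by
  have hinv : HasDerivAt (fun y : ℝ => 3 / y^2)
      ((0 * y^2 - 3 * (2*y^1)) / (y^2)^2) y :=
    (hasDerivAt_const y 3).div (hasDerivAt_pow 2 y) (pow_ne_zero 2 hy)
  have := hinv.mul (hg y)
  refine this.congr_deriv ?_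
  unfold v₁ gfun
  field_simp
  ring

lemma deriv_v0 (y : ℝ) (hy : 0 < y) : deriv v₀ y = v₁ y := by
  rw [v0_eq]
  exact (hw y hy.ne').deriv

lemma hv1 (y : ℝ) (hy : y ≠ 0) : HasDerivAt v₁
    (18/y^4 * gfun y + (-6/y^3)*(2*y*Iexp y) + ((-6/y^2)*Iexp y + 6/y*(Real.exp (y^2/4)/2))) y := by
  have h1 : HasDerivAt (fun y : ℝ => -6 / y^3)
      ((0 * y^3 - (-6) * (3*y^2)) / (y^3)^2) y :=
    (hasDerivAt_const y (-6)).div (hasDerivAt_pow 3 y) (pow_ne_zero 3 hy)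
  have h2 : HasDerivAt (fun y : ℝ => 6 / y) ((0 * y - 6 * 1) / y^2) y :=
    (hasDerivAt_const y 6).div (hasDerivAt_id y) hy
  have := (h1.mul (hg y)).add (h2.mul (hI y))
  refine this.congr_deriv ?_
  field_simp
  ring

theorem v0_solves_L0 (y : ℝ) (hy : 0 < y) :
    -(deriv (deriv v₀) y) - (2/y - y/2) * deriv v₀ y + (2/y^2) * v₀ y = 0 := by
  have hne : y ≠ 0 := hy.ne'
  have hdd : deriv (deriv v₀) y =
      18/y^4 * gfun y + (-6/y^3)*(2*y*Iexp y) + ((-6/y^2)*Iexp y + 6/y*(Real.exp (y^2/4)/2)) := by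
    have heq : deriv v₀ =ᶠ[nhds y] v₁ := by
      filter_upwards [Ioi_mem_nhds hy] with z hz
      exact deriv_v0 z hz
    rw [heq.deriv_eq]
    exact (hv1 y hne).deriv
  rw [hdd, deriv_v0 y hy, v0_eq]
  unfold v₁ wfun gfun
  field_simp
  ring
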